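/- Exponential-weight integral estimate: Let λ ∈ [0,1) and k > 0 be fixed. Then there exists a constant C = C(λ,k) > 0 such that for all t ≥ 0, e^{−(1+t)^{1−λ}/(1−λ)} · ∫₀ᵗ e^{(1+τ)^{1−λ}/(1−λ)} (1+τ)^{−k} dτ ≤ C (1+t)^{λ−k}. -/

import Mathlib

open Real MeasureTheory

/-- **Exponential-weight integral estimate** (equation (3.16) in the paper):
for λ ∈ [0,1) and k > 0 there is C = C(λ,k) > 0 with
e^{−(1+t)^{1−λ}/(1−λ)} ∫₀ᵗ e^{(1+τ)^{1−λ}/(1−λ)} (1+τ)^{−k} dτ ≤ C (1+t)^{λ−k}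
for all t ≥ 0. -/
lemma aux_pow_le_exp (x : ℝ) (hx : 0 ≤ x) (n : ℕ) : x ^ n ≤ n.factorial * Real.exp x := by
  have h := Real.sum_le_exp_of_nonneg hx (n + 1)
  have h2 : x ^ n / (n.factorial : ℝ) ≤ ∑ i ∈ Finset.range (n + 1), x ^ i / (i.factorial : ℝ) :=
    Finset.single_le_sum (f := fun i => x ^ i / (i.factorial : ℝ))
      (fun i _ => by positivity) (Finset.self_mem_range_succ n)
  have hfac : (0:ℝ) < n.factorial := by positivity
  have h3 := h2.trans h
  rw [div_le_iff₀ hfac] at h3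
  linarith

lemma aux_rp_contOn (p : ℝ) : ContinuousOn (fun τ : ℝ => (1 + τ) ^ p) (Set.Ici (-1/2 : ℝ)) := by
  apply ContinuousOn.rpow_const (by fun_prop)
  intro x hx
  simp only [Set.mem_Ici] at hx
  exact Or.inl (by linarith)

lemma aux_exp_contOn (b c : ℝ) :
    ContinuousOn (fun τ : ℝ => Real.exp ((1 + τ) ^ b / c)) (Set.Ici (-1/2 : ℝ)) :=
  Real.continuous_exp.comp_continuousOn ((aux_rp_contOn b).div_const c)

lemma aux_hasDerivAt (lam k x : ℝ) (hx : 0 < 1 + x) (hl : 0 < 1 - lam) :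
    HasDerivAt (fun τ : ℝ => Real.exp ((1 + τ) ^ (1 - lam) / (1 - lam)) * (1 + τ) ^ (lam - k))
      (Real.exp ((1 + x) ^ (1 - lam) / (1 - lam)) *
        ((1 + x) ^ (-k) + (lam - k) * ((1 + x) ^ (lam - 1) * (1 + x) ^ (-k)))) x := by
  have h1 : HasDerivAt (fun τ : ℝ => 1 + τ) 1 x := by
    simpa using (hasDerivAt_id x).const_add (1:ℝ)
  have h2 := h1.rpow_const (p := 1 - lam) (Or.inl hx.ne')
  have h4 := (h2.div_const (1 - lam)).exp
  have h5 := h1.rpow_const (p := lam - k) (Or.inl hx.ne')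
  have h6 := h4.mul h5
  refine h6.congr_deriv ?_
  have e1 : (1:ℝ) - lam - 1 = -lam := by ring
  have e2 : (1 + x) ^ (-lam) * (1 + x) ^ (lam - k) = (1 + x) ^ (-k) := by
    rw [← Real.rpow_add hx]; ring_nf
  have e3 : (1 + x) ^ (lam - 1) * (1 + x) ^ (-k) = (1 + x) ^ (lam - k - 1) := by
    rw [← Real.rpow_add hx]; ring_nf
  rw [e1, ← e3, ← e2]
  field_simp

lemma aux_ii (lam k a b : ℝ) (ha : 0 ≤ a) (hab : a ≤ b) :
    IntervalIntegrable
      (fun τ : ℝ => Real.exp ((1 + τ) ^ (1 - lam) / (1 - lam)) * (1 + τ) ^ (-k))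
      volume a b := by
  apply ContinuousOn.intervalIntegrable
  apply ((aux_exp_contOn (1 - lam) (1 - lam)).mul (aux_rp_contOn (-k))).mono
  rw [Set.uIcc_of_le hab]
  intro x hx
  simp only [Set.mem_Icc] at hx
  simp only [Set.mem_Ici]
  linarith [hx.1]

lemma aux_int1 (lam k t : ℝ) (hl : 0 < 1 - lam) (hk : 0 < k) (ht : 0 ≤ t) :
    (∫ τ in (0:ℝ)..t, Real.exp ((1 + τ) ^ (1 - lam) / (1 - lam)) * (1 + τ) ^ (-k))
      ≤ Real.exp ((1 + t) ^ (1 - lam) / (1 - lam)) * t := by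
  have hint := aux_ii lam k 0 t le_rfl ht
  have hmono := intervalIntegral.integral_mono_on (μ := volume) ht hint
      (intervalIntegrable_const (c := Real.exp ((1 + t) ^ (1 - lam) / (1 - lam))))
      (fun x hx => by
        simp only [Set.mem_Icc] at hx
        have hx1 : (0:ℝ) < 1 + x := by linarith [hx.1]
        have h1 : (1 + x) ^ (-k) ≤ 1 :=
          Real.rpow_le_one_of_one_le_of_nonpos (by linarith [hx.1]) (by linarith)
        have h2 : Real.exp ((1 + x) ^ (1 - lam) / (1 - lam))
            ≤ Real.exp ((1 + t) ^ (1 - lam) / (1 - lam)) := by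
          apply Real.exp_le_exp.2
          exact (div_le_div_iff_of_pos_right hl).2
            (Real.rpow_le_rpow (by linarith [hx.1]) (by linarith [hx.2]) hl.le)
        calc Real.exp ((1 + x) ^ (1 - lam) / (1 - lam)) * (1 + x) ^ (-k)
            ≤ Real.exp ((1 + x) ^ (1 - lam) / (1 - lam)) * 1 := by
              exact mul_le_mul_of_nonneg_left h1 (Real.exp_pos _).le
          _ ≤ Real.exp ((1 + t) ^ (1 - lam) / (1 - lam)) := by rw [mul_one]; exact h2)
  simpa [mul_comm] using hmono

lemma aux_int2 (lam k a t : ℝ) (hlam0 : 0 ≤ lam) (hl : 0 < 1 - lam) (hk : 0 < k)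
    (ha : 0 ≤ a) (hat : a ≤ t)
    (hbig : ∀ x, a ≤ x → 2 * k ≤ (1 + x) ^ (1 - lam)) :
    (∫ τ in a..t, Real.exp ((1 + τ) ^ (1 - lam) / (1 - lam)) * (1 + τ) ^ (-k))
      ≤ 2 * (Real.exp ((1 + t) ^ (1 - lam) / (1 - lam)) * (1 + t) ^ (lam - k)
            - Real.exp ((1 + a) ^ (1 - lam) / (1 - lam)) * (1 + a) ^ (lam - k)) := by
  set G' : ℝ → ℝ := fun x => Real.exp ((1 + x) ^ (1 - lam) / (1 - lam)) *
      ((1 + x) ^ (-k) + (lam - k) * ((1 + x) ^ (lam - 1) * (1 + x) ^ (-k))) with hG'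
  have hG'int : IntervalIntegrable G' volume a t := by
    apply ContinuousOn.intervalIntegrable
    apply (((aux_exp_contOn (1 - lam) (1 - lam)).mul ((aux_rp_contOn (-k)).add
      (continuousOn_const.mul ((aux_rp_contOn (lam - 1)).mul (aux_rp_contOn (-k))))) ).mono)
    rw [Set.uIcc_of_le hat]
    intro x hx
    simp only [Set.mem_Icc] at hx
    simp only [Set.mem_Ici]
    linarith [hx.1]
  have hFTC : (∫ x in a..t, G' x) =
      Real.exp ((1 + t) ^ (1 - lam) / (1 - lam)) * (1 + t) ^ (lam - k)
        - Real.exp ((1 + a) ^ (1 - lam) / (1 - lam)) * (1 + a) ^ (lam - k) := by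
    apply intervalIntegral.integral_eq_sub_of_hasDerivAt
    · intro x hx
      rw [Set.uIcc_of_le hat] at hx
      exact aux_hasDerivAt lam k x (by linarith [hx.1]) hl
    · exact hG'int
  have hfint := aux_ii lam k a t ha hat
  have hmono := intervalIntegral.integral_mono_on (μ := volume) hat hfint
      (hG'int.const_mul 2) (fun x hx => by
        simp only [Set.mem_Icc] at hx
        have hx1 : (0:ℝ) < 1 + x := by linarith [hx.1]
        have hE : 0 < Real.exp ((1 + x) ^ (1 - lam) / (1 - lam)) := Real.exp_pos _
        have hP : (0:ℝ) < (1 + x) ^ (-k) := Real.rpow_pos_of_pos hx1 _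
        have hR : (0:ℝ) < (1 + x) ^ (lam - 1) := Real.rpow_pos_of_pos hx1 _
        have hRinv : (1 + x) ^ (lam - 1) = ((1 + x) ^ (1 - lam))⁻¹ := by
          rw [show lam - 1 = -(1 - lam) by ring, Real.rpow_neg hx1.le]
        have hbx := hbig x hx.1
        have hpow_pos : (0:ℝ) < (1 + x) ^ (1 - lam) := Real.rpow_pos_of_pos hx1 _
        have hk2 : k * (1 + x) ^ (lam - 1) ≤ 1 / 2 := by
          rw [hRinv]
          rw [mul_inv_le_iff₀ hpow_pos]
          linarith
        have h3 : -(1/2 : ℝ) ≤ (lam - k) * (1 + x) ^ (lam - 1) := by nlinarith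
        simp only [hG']
        nlinarith [mul_le_mul_of_nonneg_right h3 (mul_pos hE hP).le, mul_pos hE hP])
  calc (∫ τ in a..t, Real.exp ((1 + τ) ^ (1 - lam) / (1 - lam)) * (1 + τ) ^ (-k))
      ≤ ∫ x in a..t, 2 * G' x := hmono
    _ = 2 * ∫ x in a..t, G' x := intervalIntegral.integral_const_mul 2 G'
    _ = _ := by rw [hFTC]

lemma aux_exp_poly (lam k t : ℝ) (n : ℕ) (hl : 0 < 1 - lam) (ht : 0 ≤ t)
    (hn : k - lam ≤ n * (1 - lam)) :
    (1 + t) ^ (k - lam) ≤ (1 - lam) ^ n * n.factorial *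
      Real.exp ((1 + t) ^ (1 - lam) / (1 - lam)) := by
  have h1t : (1:ℝ) ≤ 1 + t := by linarith
  have step1 : (1 + t) ^ (k - lam) ≤ (1 + t) ^ ((1 - lam) * n) :=
    Real.rpow_le_rpow_of_exponent_le h1t (by rw [mul_comm]; exact hn)
  have step2 : (1 + t) ^ ((1 - lam) * (n:ℝ)) = ((1 + t) ^ (1 - lam)) ^ n := by
    rw [Real.rpow_mul (by linarith), Real.rpow_natCast]
  have hφ0 : 0 ≤ (1 + t) ^ (1 - lam) / (1 - lam) := by positivity
  have step3 := aux_pow_le_exp _ hφ0 n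
  have e : ((1 + t) ^ (1 - lam)) ^ n = (1 - lam) ^ n * ((1 + t) ^ (1 - lam) / (1 - lam)) ^ n := by
    rw [← mul_pow]
    congr 1
    field_simp
  calc (1 + t) ^ (k - lam) ≤ (1 + t) ^ ((1 - lam) * (n:ℝ)) := step1
    _ = (1 - lam) ^ n * ((1 + t) ^ (1 - lam) / (1 - lam)) ^ n := by rw [step2, e]
    _ ≤ (1 - lam) ^ n * (n.factorial * Real.exp ((1 + t) ^ (1 - lam) / (1 - lam))) := by
        exact mul_le_mul_of_nonneg_left step3 (by positivity)
    _ = _ := by ring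

theorem exp_weight_integral_estimate (lam k : ℝ)
    (hlam0 : 0 ≤ lam) (hlam1 : lam < 1) (hk : 0 < k) :
    ∃ C : ℝ, 0 < C ∧ ∀ t : ℝ, 0 ≤ t →
      Real.exp (-(1 + t) ^ (1 - lam) / (1 - lam)) *
          (∫ τ in (0:ℝ)..t, Real.exp ((1 + τ) ^ (1 - lam) / (1 - lam)) * (1 + τ) ^ (-k))
        ≤ C * (1 + t) ^ (lam - k) := by
  have hl : 0 < 1 - lam := by linarith
  set a : ℝ := (2 * k) ^ ((1 - lam)⁻¹) with ha_def
  have ha0 : 0 ≤ a := Real.rpow_nonneg (by positivity) _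
  have hbig : ∀ x, a ≤ x → 2 * k ≤ (1 + x) ^ (1 - lam) := by
    intro x hxa
    have h1 : a ≤ 1 + x := by linarith
    have h2 : a ^ (1 - lam) ≤ (1 + x) ^ (1 - lam) :=
      Real.rpow_le_rpow ha0 h1 hl.le
    have h3 : a ^ (1 - lam) = 2 * k := by
      rw [ha_def, ← Real.rpow_mul (by positivity), inv_mul_cancel₀ hl.ne', Real.rpow_one]
    linarith
  set n : ℕ := ⌈k / (1 - lam)⌉₊ with hn_def
  have hn : k - lam ≤ (n : ℝ) * (1 - lam) := by
    have h1 : k / (1 - lam) ≤ (n : ℝ) := Nat.le_ceil _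
    rw [div_le_iff₀ hl] at h1
    linarith
  set M1 : ℝ := max 1 ((1 + a) ^ (k - lam)) with hM1_def
  have hM1 : 0 < M1 := lt_of_lt_of_le one_pos (le_max_left _ _)
  set M2 : ℝ := (1 - lam) ^ n * n.factorial with hM2_def
  have hM2 : 0 < M2 := by positivity
  set Ea : ℝ := Real.exp ((1 + a) ^ (1 - lam) / (1 - lam)) with hEa_def
  have hEa : 0 < Ea := Real.exp_pos _
  refine ⟨a * M1 + a * Ea * M2 + 2 + 1, by positivity, fun t ht => ?_⟩
  have h1t : (0:ℝ) < 1 + t := by linarith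
  set E : ℝ := Real.exp ((1 + t) ^ (1 - lam) / (1 - lam)) with hE_def
  have hE : 0 < E := Real.exp_pos _
  set X : ℝ := (1 + t) ^ (lam - k) with hX_def
  have hX : 0 < X := Real.rpow_pos_of_pos h1t _
  have hXinv : (1 + t) ^ (k - lam) * X = 1 := by
    rw [hX_def, ← Real.rpow_add h1t]
    norm_num
  set C : ℝ := a * M1 + a * Ea * M2 + 2 + 1 with hC_def
  -- reduce to I ≤ C * X * E
  have hneg : -(1 + t) ^ (1 - lam) / (1 - lam) = -((1 + t) ^ (1 - lam) / (1 - lam)) :=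
    neg_div _ _
  rw [hneg, Real.exp_neg, ← hE_def]
  set I : ℝ := ∫ τ in (0:ℝ)..t, Real.exp ((1 + τ) ^ (1 - lam) / (1 - lam)) * (1 + τ) ^ (-k)
    with hI_def
  suffices hIle : I ≤ C * X * E by
    have := mul_le_mul_of_nonneg_left hIle (inv_nonneg.2 hE.le)
    calc E⁻¹ * I ≤ E⁻¹ * (C * X * E) := this
      _ = C * X := by field_simp
  -- key: 1 ≤ M2 * X * E
  have hpoly := aux_exp_poly lam k t n hl ht hn
  rw [← hE_def] at hpoly
  have hone : 1 ≤ M2 * X * E := by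
    have h := mul_le_mul_of_nonneg_right hpoly hX.le
    rw [hXinv] at h
    have he : (1 - lam) ^ n * (n.factorial : ℝ) * E * X = M2 * X * E := by
      rw [hM2_def]; ring
    linarith [he ▸ h]
  rcases le_or_gt t a with hta | hta
  · -- small t
    have h1 := aux_int1 lam k t hl hk ht
    have hXk : (1 + t) ^ (k - lam) ≤ M1 := by
      rcases le_or_gt 0 (k - lam) with hkl | hkl
      · exact le_trans (Real.rpow_le_rpow (by linarith) (by linarith) hkl)
          (le_max_right _ _)
      · exact le_trans (Real.rpow_le_one_of_one_le_of_nonpos (by linarith) hkl.le)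
          (le_max_left _ _)
    have hMX : 1 ≤ M1 * X := by
      calc (1:ℝ) = (1 + t) ^ (k - lam) * X := hXinv.symm
        _ ≤ M1 * X := mul_le_mul_of_nonneg_right hXk hX.le
    have htC : t ≤ C * X := by
      calc t ≤ a := hta
        _ = a * 1 := (mul_one a).symm
        _ ≤ a * (M1 * X) := mul_le_mul_of_nonneg_left hMX ha0
        _ ≤ C * X := by
            have h0 : 0 ≤ (a * Ea * M2 + 2 + 1) * X := by positivity
            rw [hC_def]; nlinarith [h0]
    calc I ≤ E * t := h1
      _ ≤ E * (C * X) := mul_le_mul_of_nonneg_left htC hE.le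
      _ = C * X * E := by ring
  · -- large t
    have hsplit : I = (∫ τ in (0:ℝ)..a, Real.exp ((1 + τ) ^ (1 - lam) / (1 - lam)) * (1 + τ) ^ (-k))
        + ∫ τ in a..t, Real.exp ((1 + τ) ^ (1 - lam) / (1 - lam)) * (1 + τ) ^ (-k) :=
      (intervalIntegral.integral_add_adjacent_intervals
        (aux_ii lam k 0 a le_rfl ha0) (aux_ii lam k a t ha0 hta.le)).symm
    have h1 := aux_int1 lam k a hl hk ha0
    have h2 := aux_int2 lam k a t hlam0 hl hk ha0 hta.le hbig
    have hFa : 0 ≤ Ea * (1 + a) ^ (lam - k) :=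
      mul_nonneg hEa.le (Real.rpow_nonneg (by linarith) _)
    have hEaa : Ea * a ≤ a * Ea * (M2 * X * E) := by
      have := mul_le_mul_of_nonneg_left hone (mul_nonneg ha0 hEa.le)
      calc Ea * a = a * Ea * 1 := by ring
        _ ≤ a * Ea * (M2 * X * E) := this
    calc I ≤ Ea * a + 2 * (E * X - Ea * (1 + a) ^ (lam - k)) := by
          rw [hsplit]; exact add_le_add h1 h2
      _ ≤ Ea * a + 2 * (E * X) := by linarith
      _ ≤ a * Ea * M2 * X * E + 2 * (E * X) := by
          calc Ea * a + 2 * (E * X) ≤ a * Ea * (M2 * X * E) + 2 * (E * X) := by linarith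
            _ = a * Ea * M2 * X * E + 2 * (E * X) := by ring
      _ ≤ C * X * E := by
          have h0 : 0 ≤ (a * M1 + 1) * (X * E) := by positivity
          rw [hC_def]; nlinarith [h0]
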